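/- Let F be a feasible R-special directed solution and K a finite set of hyper-links. A directed link (u,v) ∈ F belongs to drop_F(K) if and only if the hyper-link intersection graph Γ(K) contains a path from a hyper-link containing v to a hyper-link containing some v-good vertex w. -/

import Mathlib

/-- `Reach F u v`: there is a directed path of links of `F` from `u` to `v`. -/
def Reach (F : Finset (ℕ × ℕ)) (u v : ℕ) : Prop :=
  Relation.ReflTransGen (fun a b => (a, b) ∈ F) u v

/-- A directed link `(u,v)` enters a cut `C` if `v ∈ C` and `u ∉ C`. -/
def Enters (f : ℕ × ℕ) (C : Set ℕ) : Prop := f.2 ∈ C ∧ f.1 ∉ C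

/-- Two directed links cross if their intervals `[a,b]`, `[c,d]` satisfy
`a < c < b < d` or `c < a < d < b`. -/
def Crosses (f g : ℕ × ℕ) : Prop :=
  (min f.1 f.2 < min g.1 g.2 ∧ min g.1 g.2 < max f.1 f.2 ∧ max f.1 f.2 < max g.1 g.2) ∨
    (min g.1 g.2 < min f.1 f.2 ∧ min f.1 f.2 < max g.1 g.2 ∧ max g.1 g.2 < max f.1 f.2)

/-- `F` is an `R`-special directed solution (with root `r = 0`):
(1) the endpoints of every link are distinct and lie in `R`;
(2) `(R, F)` is an `r`-out arborescence;
(3) no two links of `F` cross;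
(4) no two links of `F` leaving the same vertex go in the same direction. -/
def RSpecial (R : Finset ℕ) (F : Finset (ℕ × ℕ)) : Prop :=
  (∀ f ∈ F, f.1 ≠ f.2 ∧ f.1 ∈ R ∧ f.2 ∈ R) ∧
    (∀ f ∈ F, f.2 ≠ 0) ∧
    (∀ v ∈ R, v ≠ 0 → ∃! f : ℕ × ℕ, f ∈ F ∧ f.2 = v) ∧
    (∀ v ∈ R, Reach F 0 v) ∧
    (∀ f ∈ F, ∀ g ∈ F, f ≠ g → ¬Crosses f g) ∧
    (∀ f ∈ F, ∀ g ∈ F, f ≠ g → f.1 = g.1 →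
      ¬((f.1 < f.2 ∧ g.1 < g.2) ∨ (f.2 < f.1 ∧ g.2 < g.1)))

/-- A ring-cut is an interval `{a, …, b}` with `1 ≤ a ≤ b ≤ n-1`. -/
def IsRingCut (n : ℕ) (C : Set ℕ) : Prop :=
  ∃ a b : ℕ, 1 ≤ a ∧ a ≤ b ∧ b ≤ n - 1 ∧ C = Set.Icc a b

/-- `F` is feasible: every dangerous ring-cut is entered by some link of `F`. -/
def FeasibleDir (n : ℕ) (R : Finset ℕ) (F : Finset (ℕ × ℕ)) : Prop :=
  ∀ C : Set ℕ, IsRingCut n C → (C ∩ ↑R).Nonempty → ∃ f ∈ F, Enters f C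

/-- A link `f = (u,v) ∈ F` is responsible for a cut `C` if it enters `C` and no link on the
unique directed path in `(R,F)` from the root to `u` (i.e. no link of `F` whose head is an
ancestor of `u`) enters `C`. -/
def Responsible (F : Finset (ℕ × ℕ)) (f : ℕ × ℕ) (C : Set ℕ) : Prop :=
  f ∈ F ∧ Enters f C ∧ ∀ g ∈ F, Reach F g.2 f.1 → ¬Enters g C

/-- `[a, b]` is the `v`-bad interval `I_v`: the maximal interval of `V(H)` containing `v`
that contains no terminal which is not a descendant of `v`. -/
def IsBadInterval (n : ℕ) (R : Finset ℕ) (F : Finset (ℕ × ℕ)) (v a b : ℕ) : Prop :=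
  a ≤ v ∧ v ≤ b ∧ b ≤ n - 1 ∧ (∀ w ∈ R, a ≤ w → w ≤ b → Reach F v w) ∧
    ∀ a' b' : ℕ, a' ≤ a → b ≤ b' → b' ≤ n - 1 →
      (∀ w ∈ R, a' ≤ w → w ≤ b' → Reach F v w) → a' = a ∧ b' = b

/-- A hyper-link `ℓ` covers a ring-cut `C` if `ℓ ∩ C ≠ ∅` and `ℓ ∖ C ≠ ∅`. -/
def Covers (ℓ : Finset ℕ) (C : Set ℕ) : Prop :=
  (∃ x ∈ ℓ, x ∈ C) ∧ (∃ x ∈ ℓ, x ∉ C)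

/-- Two hyper-links are intersecting if they share a vertex, or each has a vertex strictly
between two vertices of the other. -/
def Intersecting (ℓ ℓ' : Finset ℕ) : Prop :=
  (ℓ ∩ ℓ').Nonempty ∨
    ((∃ x ∈ ℓ, ∃ y₁ ∈ ℓ', ∃ y₂ ∈ ℓ', y₁ < x ∧ x < y₂) ∧
      (∃ y ∈ ℓ', ∃ x₁ ∈ ℓ, ∃ x₂ ∈ ℓ, x₁ < y ∧ y < x₂))

/-- There is a path from `u` to `v` in the hyper-link intersection graph `Γ(K)`. -/
def GammaPath (K : Finset (Finset ℕ)) (u v : ℕ) : Prop :=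
  ∃ ℓ₁ ∈ K, ∃ ℓ₂ ∈ K, u ∈ ℓ₁ ∧ v ∈ ℓ₂ ∧
    Relation.ReflTransGen (fun a b => a ∈ K ∧ b ∈ K ∧ Intersecting a b) ℓ₁ ℓ₂

/-- `f ∈ drop_F(K)`: every dangerous ring-cut that `f` is responsible for is covered by
some hyper-link of `K`. -/
def InDrop (n : ℕ) (R : Finset ℕ) (F : Finset (ℕ × ℕ)) (K : Finset (Finset ℕ))
    (f : ℕ × ℕ) : Prop :=
  f ∈ F ∧ ∀ C : Set ℕ, IsRingCut n C → (C ∩ ↑R).Nonempty → Responsible F f C →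
    ∃ ℓ ∈ K, Covers ℓ C
section Aux

open Relation

variable {F : Finset (ℕ × ℕ)} {R : Finset ℕ}

/-- Reachability with an explicit path length. -/
inductive RNaux (F : Finset (ℕ × ℕ)) : ℕ → ℕ → ℕ → Prop
  | refl (a : ℕ) : RNaux F a a 0
  | tail {a b c k : ℕ} : RNaux F a b k → (b, c) ∈ F → RNaux F a c (k + 1)

lemma reach_iff_rn {a b : ℕ} : Reach F a b ↔ ∃ k, RNaux F a b k := by
  constructor
  · intro h
    induction h with
    | refl => exact ⟨0, .refl a⟩
    | tail _ e ih => obtain ⟨k, hk⟩ := ih; exact ⟨k + 1, hk.tail e⟩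
  · rintro ⟨k, hk⟩
    induction hk with
    | refl => exact .refl
    | tail _ e ih => exact ih.tail e

lemma RNaux.toReach {a b k : ℕ} (h : RNaux F a b k) : Reach F a b :=
  reach_iff_rn.mpr ⟨k, h⟩

lemma RNaux.append {a b c i j : ℕ} (h1 : RNaux F a b i) (h2 : RNaux F b c j) :
    RNaux F a c (i + j) := by
  induction h2 with
  | refl => exact h1
  | tail _ e ih => exact ih.tail e

lemma RNaux.cast {a b i j : ℕ} (h : RNaux F a b i) (hij : i = j) : RNaux F a b j := hij ▸ h

lemma in_unique (hends : ∀ f ∈ F, f.1 ≠ f.2 ∧ f.1 ∈ R ∧ f.2 ∈ R)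
    (hne0 : ∀ f ∈ F, f.2 ≠ 0)
    (huniq : ∀ v ∈ R, v ≠ 0 → ∃! f : ℕ × ℕ, f ∈ F ∧ f.2 = v)
    {c c' b : ℕ} (h1 : (c, b) ∈ F) (h2 : (c', b) ∈ F) : c = c' := by
  obtain ⟨f0, _, hu⟩ := huniq b (hends _ h1).2.2 (hne0 _ h1)
  have e1 := hu (c, b) ⟨h1, rfl⟩
  have e2 := hu (c', b) ⟨h2, rfl⟩
  have : (c, b) = (c', b) := e1.trans e2.symm
  exact (Prod.mk.injEq _ _ _ _ ▸ this).1

lemma rn0_unique (hends : ∀ f ∈ F, f.1 ≠ f.2 ∧ f.1 ∈ R ∧ f.2 ∈ R)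
    (hne0 : ∀ f ∈ F, f.2 ≠ 0)
    (huniq : ∀ v ∈ R, v ≠ 0 → ∃! f : ℕ × ℕ, f ∈ F ∧ f.2 = v) :
    ∀ m {b m'}, RNaux F 0 b m → RNaux F 0 b m' → m = m' := by
  intro m
  induction m using Nat.strong_induction_on with
  | _ m IH =>
    intro b m' h1 h2
    cases h1 with
    | refl =>
      cases h2 with
      | refl => rfl
      | tail h e => exact absurd rfl (hne0 _ e)
    | tail h e =>
      cases h2 with
      | refl => exact absurd rfl (hne0 _ e)
      | tail h' e' =>
        rename_i a k a' k'
        have : a = a' := in_unique hends hne0 huniq e e'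
        subst this
        have := IH k (by omega) h h'
        omega

lemma no_cycle (hends : ∀ f ∈ F, f.1 ≠ f.2 ∧ f.1 ∈ R ∧ f.2 ∈ R)
    (hne0 : ∀ f ∈ F, f.2 ≠ 0)
    (huniq : ∀ v ∈ R, v ≠ 0 → ∃! f : ℕ × ℕ, f ∈ F ∧ f.2 = v) :
    ∀ m {a k}, RNaux F 0 a m → RNaux F a a (k + 1) → False := by
  intro m
  induction m using Nat.strong_induction_on with
  | _ m IH =>
    intro a k h0 hc
    cases hc with
    | tail h e =>
      rename_i c
      cases h0 with
      | refl => exact hne0 _ e rfl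
      | tail h' e' =>
        rename_i a' m'
        have : a' = c := in_unique hends hne0 huniq e' e
        subst this
        exact IH m' (by omega) h'
          ((((RNaux.refl a').tail e).append h).cast (j := k + 1) (by omega))

lemma mem_R_of_reach (hends : ∀ f ∈ F, f.1 ≠ f.2 ∧ f.1 ∈ R ∧ f.2 ∈ R)
    {y u : ℕ} (h : Reach F y u) (hu : u ∈ R) : y ∈ R := by
  rcases h.cases_head with rfl | ⟨z, hz, _⟩
  · exact hu
  · exact (hends _ hz).2.1

lemma reach_antisymm (hends : ∀ f ∈ F, f.1 ≠ f.2 ∧ f.1 ∈ R ∧ f.2 ∈ R)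
    (hne0 : ∀ f ∈ F, f.2 ≠ 0)
    (huniq : ∀ v ∈ R, v ≠ 0 → ∃! f : ℕ × ℕ, f ∈ F ∧ f.2 = v)
    (hreach : ∀ v ∈ R, Reach F 0 v)
    {a b : ℕ} (ha : a ∈ R) (h1 : Reach F a b) (h2 : Reach F b a) : a = b := by
  obtain ⟨k, hk⟩ := reach_iff_rn.mp h1
  obtain ⟨l, hl⟩ := reach_iff_rn.mp h2
  cases hk with
  | refl => rfl
  | tail h e =>
    rename_i c k'
    obtain ⟨m, hm⟩ := reach_iff_rn.mp (hreach a ha)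
    exact (no_cycle hends hne0 huniq m (k := k' + l) hm (((h.tail e).append hl).cast (by omega))).elim

lemma reach_through_parent (hends : ∀ f ∈ F, f.1 ≠ f.2 ∧ f.1 ∈ R ∧ f.2 ∈ R)
    (hne0 : ∀ f ∈ F, f.2 ≠ 0)
    (huniq : ∀ v ∈ R, v ≠ 0 → ∃! f : ℕ × ℕ, f ∈ F ∧ f.2 = v)
    {u v t : ℕ} (hf : (u, v) ∈ F) (h : Reach F t v) (hne : t ≠ v) : Reach F t u := by
  obtain ⟨k, hk⟩ := reach_iff_rn.mp h
  cases hk with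
  | refl => exact absurd rfl hne
  | tail h' e =>
    have : _ = u := in_unique hends hne0 huniq e hf
    exact this ▸ h'.toReach

end Aux
section Aux2

open Relation

variable {F : Finset (ℕ × ℕ)} {R : Finset ℕ}

lemma entry (hends : ∀ f ∈ F, f.1 ≠ f.2 ∧ f.1 ∈ R ∧ f.2 ∈ R)
    (hne0 : ∀ f ∈ F, f.2 ≠ 0)
    (huniq : ∀ v ∈ R, v ≠ 0 → ∃! f : ℕ × ℕ, f ∈ F ∧ f.2 = v)
    (hreach : ∀ v ∈ R, Reach F 0 v)
    (hcross : ∀ f ∈ F, ∀ g ∈ F, f ≠ g → ¬Crosses f g)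
    (hdir : ∀ f ∈ F, ∀ g ∈ F, f ≠ g → f.1 = g.1 →
      ¬((f.1 < f.2 ∧ g.1 < g.2) ∨ (f.2 < f.1 ∧ g.2 < g.1)))
    {a b c : ℕ} (hab : (a, b) ∈ F) (hcR : c ∈ R)
    (h1 : min a b < c) (h2 : c < max a b) : Reach F b c := by
  have hne : a ≠ b := (hends _ hab).1
  have key : ∀ c, Reach F 0 c → min a b < c → c < max a b → Reach F b c := by
    intro c h
    induction h with
    | refl => intro h1 _; exact absurd h1 (by omega)
    | @tail x y hx e ih =>
      intro h1 h2
      by_cases hio : min a b < x ∧ x < max a b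
      · exact (ih hio.1 hio.2).tail e
      · rcases Nat.lt_trichotomy x (min a b) with hxm | hxm | hxm
        · exact absurd (show Crosses (x, y) (a, b) by
              unfold Crosses; dsimp only; omega)
            (hcross _ e _ hab (by intro hq; rw [Prod.mk.injEq] at hq; omega))
        · rcases Nat.lt_or_ge a b with hab' | hab'
          · have hxa : x = a := by omega
            subst hxa
            exact absurd (Or.inl ⟨(by omega : x < y), (by omega : x < b)⟩)
              (hdir _ e _ hab (by intro hq; rw [Prod.mk.injEq] at hq; omega) rfl)
          · have hxb : x = b := by omega
            exact ReflTransGen.single (hxb ▸ e)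
        · rcases Nat.lt_trichotomy x (max a b) with hxM | hxM | hxM
          · omega
          · rcases Nat.lt_or_ge a b with hab' | hab'
            · have hxb : x = b := by omega
              exact ReflTransGen.single (hxb ▸ e)
            · have hxa : x = a := by omega
              subst hxa
              exact absurd (Or.inr ⟨(by omega : y < x), (by omega : b < x)⟩)
                (hdir _ e _ hab (by intro hq; rw [Prod.mk.injEq] at hq; omega) rfl)
          · exact absurd (show Crosses (x, y) (a, b) by
                unfold Crosses; dsimp only; omega)
              (hcross _ e _ hab (by intro hq; rw [Prod.mk.injEq] at hq; omega))
  exact key c (hreach c hcR) h1 h2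

lemma span {p q : ℕ} (hpq : p ≤ q) :
    ∀ {lam w k : ℕ}, RNaux F lam w k →
    (∀ y, Reach F y w → y < p ∨ q < y) →
    ((lam < p ∧ q < w) ∨ (q < lam ∧ w < p)) →
    ∃ s t, (s, t) ∈ F ∧ Reach F lam s ∧ min s t < p ∧ q < max s t := by
  intro lam w k h
  induction h with
  | refl => intro _ hor; exact absurd hor (by omega)
  | tail hab e ih =>
    rename_i b c k
    intro hclean horient
    have hb : b < p ∨ q < b := hclean b (Relation.ReflTransGen.single e)
    rcases horient with ⟨hl, hw⟩ | ⟨hl, hw⟩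
    · rcases hb with hb | hb
      · exact ⟨b, c, e, hab.toReach, by omega, by omega⟩
      · exact ih (fun y hy => hclean y (hy.tail e)) (Or.inl ⟨hl, hb⟩)
    · rcases hb with hb | hb
      · exact ih (fun y hy => hclean y (hy.tail e)) (Or.inr ⟨hl, hb⟩)
      · exact ⟨b, c, e, hab.toReach, by omega, by omega⟩

lemma clean_of_responsible (hends : ∀ f ∈ F, f.1 ≠ f.2 ∧ f.1 ∈ R ∧ f.2 ∈ R)
    (hreach : ∀ v ∈ R, Reach F 0 v)
    {u v : ℕ} {C : Set ℕ} (hresp : Responsible F (u, v) C) (h0 : (0 : ℕ) ∉ C)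
    (huR : u ∈ R) : ∀ y, Reach F y u → y ∉ C := by
  have inner : ∀ m y, RNaux F 0 y m → Reach F y u → y ∉ C := by
    intro m
    induction m using Nat.strong_induction_on with
    | _ m IH =>
      intro y hy hyu
      cases hy with
      | refl => exact h0
      | tail h e =>
        rename_i cc mm
        have hcu : Reach F cc u := (Relation.ReflTransGen.single e).trans hyu
        have hcC : cc ∉ C := IH mm (by omega) cc h hcu
        intro hyC
        exact hresp.2.2 (cc, y) e hyu ⟨hyC, hcC⟩
  intro y hyu
  obtain ⟨m, hm⟩ := reach_iff_rn.mp (hreach y (mem_R_of_reach hends hyu huR))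
  exact inner m y hm hyu

end Aux2
section Aux3

open Relation

variable {F : Finset (ℕ × ℕ)} {R : Finset ℕ}

lemma core (hends : ∀ f ∈ F, f.1 ≠ f.2 ∧ f.1 ∈ R ∧ f.2 ∈ R)
    (hne0 : ∀ f ∈ F, f.2 ≠ 0)
    (huniq : ∀ v ∈ R, v ≠ 0 → ∃! f : ℕ × ℕ, f ∈ F ∧ f.2 = v)
    (hreach : ∀ v ∈ R, Reach F 0 v)
    (hcross : ∀ f ∈ F, ∀ g ∈ F, f ≠ g → ¬Crosses f g)
    (hdir : ∀ f ∈ F, ∀ g ∈ F, f ≠ g → f.1 = g.1 →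
      ¬((f.1 < f.2 ∧ g.1 < g.2) ∨ (f.2 < f.1 ∧ g.2 < g.1)))
    {p q u v x z : ℕ}
    (hf : (u, v) ∈ F) (hg : (x, z) ∈ F)
    (hvC : p ≤ v ∧ v ≤ q) (hzC : p ≤ z ∧ z ≤ q)
    (hopp : (u < p ∧ q < x) ∨ (q < u ∧ x < p))
    (hcu : ∀ y, Reach F y u → y < p ∨ q < y)
    (hcx : ∀ y, Reach F y x → y < p ∨ q < y)
    {du dx : ℕ} (hdu : RNaux F 0 u du) (hdx : RNaux F 0 x dx) :
    ∀ N lam dlam, RNaux F 0 lam dlam → Reach F lam u → Reach F lam x →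
      (lam < p ∨ q < lam) → (du - dlam) + (dx - dlam) ≤ N → Reach F v z := by
  have hvR : v ∈ R := (hends _ hf).2.2
  have hzR : z ∈ R := (hends _ hg).2.2
  have hpq : p ≤ q := by omega
  intro N
  induction N using Nat.strong_induction_on with
  | _ N IH =>
    intro lam dlam hdlam hlu hlx hside hN
    obtain ⟨s, t, hst, hls, hm1, hm2⟩ :
        ∃ s t, (s, t) ∈ F ∧ Reach F lam s ∧ min s t < p ∧ q < max s t := by
      rcases hside with hside | hside
      · rcases hopp with ⟨h1, h2⟩ | ⟨h1, h2⟩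
        · obtain ⟨k, hk⟩ := reach_iff_rn.mp hlx
          exact span hpq hk hcx (Or.inl ⟨hside, h2⟩)
        · obtain ⟨k, hk⟩ := reach_iff_rn.mp hlu
          exact span hpq hk hcu (Or.inl ⟨hside, h1⟩)
      · rcases hopp with ⟨h1, h2⟩ | ⟨h1, h2⟩
        · obtain ⟨k, hk⟩ := reach_iff_rn.mp hlu
          exact span hpq hk hcu (Or.inr ⟨hside, h1⟩)
        · obtain ⟨k, hk⟩ := reach_iff_rn.mp hlx
          exact span hpq hk hcx (Or.inr ⟨hside, h2⟩)
    have hRtv : Reach F t v :=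
      entry hends hne0 huniq hreach hcross hdir hst hvR (by omega) (by omega)
    have hRtz : Reach F t z :=
      entry hends hne0 huniq hreach hcross hdir hst hzR (by omega) (by omega)
    by_cases htv : t = v
    · exact htv ▸ hRtz
    · have hRtu : Reach F t u := reach_through_parent hends hne0 huniq hf hRtv htv
      have htside : t < p ∨ q < t := hcu t hRtu
      have hRtx : Reach F t x := reach_through_parent hends hne0 huniq hg hRtz (by omega)
      obtain ⟨ks, hks⟩ := reach_iff_rn.mp hls
      have hdt : RNaux F 0 t (dlam + ks + 1) := (hdlam.append hks).tail hst
      obtain ⟨k1, hk1⟩ := reach_iff_rn.mp hRtu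
      have e1 : du = dlam + ks + 1 + k1 :=
        rn0_unique hends hne0 huniq du hdu (hdt.append hk1)
      obtain ⟨k2, hk2⟩ := reach_iff_rn.mp hRtx
      have e2 : dx = dlam + ks + 1 + k2 :=
        rn0_unique hends hne0 huniq dx hdx (hdt.append hk2)
      exact IH ((du - (dlam + ks + 1)) + (dx - (dlam + ks + 1))) (by omega) t (dlam + ks + 1)
        hdt hRtu hRtx htside (le_refl _)

lemma crux (hends : ∀ f ∈ F, f.1 ≠ f.2 ∧ f.1 ∈ R ∧ f.2 ∈ R)
    (hne0 : ∀ f ∈ F, f.2 ≠ 0)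
    (huniq : ∀ v ∈ R, v ≠ 0 → ∃! f : ℕ × ℕ, f ∈ F ∧ f.2 = v)
    (hreach : ∀ v ∈ R, Reach F 0 v)
    (hcross : ∀ f ∈ F, ∀ g ∈ F, f ≠ g → ¬Crosses f g)
    (hdir : ∀ f ∈ F, ∀ g ∈ F, f ≠ g → f.1 = g.1 →
      ¬((f.1 < f.2 ∧ g.1 < g.2) ∨ (f.2 < f.1 ∧ g.2 < g.1)))
    {p q u v : ℕ} (hp : 1 ≤ p)
    (hresp : Responsible F (u, v) (Set.Icc p q)) :
    ∀ z ∈ R, p ≤ z → z ≤ q → Reach F v z := by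
  have hf : (u, v) ∈ F := hresp.1
  have hvC' : v ∈ Set.Icc p q := hresp.2.1.1
  have huC : u ∉ Set.Icc p q := hresp.2.1.2
  rw [Set.mem_Icc] at hvC'
  have huR : u ∈ R := (hends _ hf).2.1
  have hcu' : ∀ y, Reach F y u → y ∉ Set.Icc p q :=
    clean_of_responsible hends hreach hresp (by rw [Set.mem_Icc]; omega) huR
  have hcu : ∀ y, Reach F y u → y < p ∨ q < y := by
    intro y hy; have := hcu' y hy; rw [Set.mem_Icc] at this; omega
  have huside : u < p ∨ q < u := by rw [Set.mem_Icc] at huC; omega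
  have inner : ∀ m z, RNaux F 0 z m → z ∈ R → p ≤ z → z ≤ q → Reach F v z := by
    intro m
    induction m using Nat.strong_induction_on with
    | _ m IH =>
      intro z hz hzR hpz hzq
      by_cases hzv : z = v
      · exact hzv ▸ Relation.ReflTransGen.refl
      cases hz with
      | refl => omega
      | tail h e =>
        rename_i x' m'
        have hx'R : x' ∈ R := (hends _ e).2.1
        by_cases hx'C : p ≤ x' ∧ x' ≤ q
        · exact (IH m' (by omega) x' h hx'R hx'C.1 hx'C.2).tail e
        · by_cases hyx : ∃ y, (p ≤ y ∧ y ≤ q) ∧ Reach F y x'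
          · obtain ⟨y, hyb, hyr⟩ := hyx
            have hyR : y ∈ R := mem_R_of_reach hends hyr hx'R
            obtain ⟨k, hk⟩ := reach_iff_rn.mp hyr
            obtain ⟨my, hmy⟩ := reach_iff_rn.mp (hreach y hyR)
            have hsum : my + k = m' := rn0_unique hends hne0 huniq _ (hmy.append hk) h
            have hvy : Reach F v y := IH my (by omega) y hmy hyR hyb.1 hyb.2
            exact (hvy.trans hyr).tail e
          · push_neg at hyx
            have hcx : ∀ y, Reach F y x' → y < p ∨ q < y := by
              intro y hy
              by_contra hcon
              push_neg at hcon
              exact hyx y ⟨by omega, by omega⟩ hy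
            have hx'side : x' < p ∨ q < x' := by
              by_contra hcon; push_neg at hcon; exact hx'C ⟨by omega, by omega⟩
            rcases huside with hu | hu
            · rcases hx'side with hx' | hx'
              · rcases Nat.lt_trichotomy x' u with hlt | heq | hgt
                · have hzu : Reach F z u :=
                    entry hends hne0 huniq hreach hcross hdir e huR (by omega) (by omega)
                  have := hcu z hzu; omega
                · subst heq
                  exact absurd (Or.inl ⟨(by omega : x' < v), (by omega : x' < z)⟩)
                    (hdir _ hf _ e (by intro hq; rw [Prod.mk.injEq] at hq; omega) rfl)
                · have hvx : Reach F v x' :=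
                    entry hends hne0 huniq hreach hcross hdir hf hx'R (by omega) (by omega)
                  exact hvx.tail e
              · obtain ⟨du, hdu⟩ := reach_iff_rn.mp (hreach u huR)
                obtain ⟨dx, hdx⟩ := reach_iff_rn.mp (hreach x' hx'R)
                exact core hends hne0 huniq hreach hcross hdir hf e ⟨hvC'.1, hvC'.2⟩
                  ⟨hpz, hzq⟩ (Or.inl ⟨hu, hx'⟩) hcu hcx hdu hdx (du + dx) 0 0 (RNaux.refl 0)
                  (hreach u huR) (hreach x' hx'R) (Or.inl (by omega)) (by omega)
            · rcases hx'side with hx' | hx'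
              · obtain ⟨du, hdu⟩ := reach_iff_rn.mp (hreach u huR)
                obtain ⟨dx, hdx⟩ := reach_iff_rn.mp (hreach x' hx'R)
                exact core hends hne0 huniq hreach hcross hdir hf e ⟨hvC'.1, hvC'.2⟩
                  ⟨hpz, hzq⟩ (Or.inr ⟨hu, hx'⟩) hcu hcx hdu hdx (du + dx) 0 0 (RNaux.refl 0)
                  (hreach u huR) (hreach x' hx'R) (Or.inl (by omega)) (by omega)
              · rcases Nat.lt_trichotomy x' u with hlt | heq | hgt
                · have hvx : Reach F v x' :=
                    entry hends hne0 huniq hreach hcross hdir hf hx'R (by omega) (by omega)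
                  exact hvx.tail e
                · subst heq
                  exact absurd (Or.inr ⟨(by omega : v < x'), (by omega : z < x')⟩)
                    (hdir _ hf _ e (by intro hq; rw [Prod.mk.injEq] at hq; omega) rfl)
                · have hzu : Reach F z u :=
                    entry hends hne0 huniq hreach hcross hdir e huR (by omega) (by omega)
                  have := hcu z hzu; omega
  intro z hzR hpz hzq
  obtain ⟨m, hm⟩ := reach_iff_rn.mp (hreach z hzR)
  exact inner m z hm hzR hpz hzq

end Aux3
section Aux4

open Relation

variable {F : Finset (ℕ × ℕ)} {R : Finset ℕ}

lemma intersecting_symm {a b : Finset ℕ} (h : Intersecting a b) : Intersecting b a := by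
  rcases h with h | ⟨h1, h2⟩
  · left; rwa [Finset.inter_comm]
  · exact Or.inr ⟨h2, h1⟩

lemma badex {n : ℕ} (hR : R ⊆ Finset.range n) {v : ℕ} (hv : v ∈ R) (hn0 : 0 < n) :
    ∃ a b, IsBadInterval n R F v a b := by
  classical
  have hvn : v ≤ n - 1 := by have := hR hv; rw [Finset.mem_range] at this; omega
  have hPex : ∃ m, ∀ w ∈ R, m ≤ w → w ≤ v → Reach F v w := by
    refine ⟨v, fun w _ h1 h2 => ?_⟩
    have : w = v := le_antisymm h2 h1
    exact this ▸ Relation.ReflTransGen.refl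
  set Q : ℕ → Prop := fun b' => ∀ w ∈ R, v ≤ w → w ≤ b' → Reach F v w with hQdef
  have hQv : Q v := fun w _ h1 h2 => by
    have : w = v := le_antisymm h2 h1
    exact this ▸ Relation.ReflTransGen.refl
  refine ⟨Nat.find hPex, Nat.findGreatest Q (n - 1),
    Nat.find_min' hPex (fun w hw h1 h2 => by
      have : w = v := le_antisymm h2 h1
      exact this ▸ Relation.ReflTransGen.refl),
    Nat.le_findGreatest hvn hQv, Nat.findGreatest_le _, ?_, ?_⟩
  · intro w hw h1 h2
    rcases le_total w v with hle | hle
    · exact Nat.find_spec hPex w hw h1 hle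
    · exact Nat.findGreatest_spec hvn hQv w hw hle h2
  · intro a' b' ha' hb' hb'n hprop
    have hav : Nat.find hPex ≤ v := Nat.find_min' hPex (fun w hw h1 h2 => by
      have : w = v := le_antisymm h2 h1
      exact this ▸ Relation.ReflTransGen.refl)
    have hvb : v ≤ Nat.findGreatest Q (n - 1) := Nat.le_findGreatest hvn hQv
    constructor
    · exact le_antisymm ha' (Nat.find_min' hPex (fun w hw h1 h2 => hprop w hw h1 (by omega)))
    · refine le_antisymm ?_ hb'
      by_contra hcon
      push_neg at hcon
      exact Nat.findGreatest_is_greatest hcon hb'n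
        (fun w hw h1 h2 => hprop w hw (by omega) h2)

end Aux4

/-- A directed link `(u,v) ∈ F` is in `drop_F(K)` iff `Γ(K)` contains a path from a
hyper-link containing `v` to a hyper-link containing some `v`-good vertex `w`. -/
theorem stmt7 (n : ℕ) (hn : 3 ≤ n) (R : Finset ℕ) (hR : R ⊆ Finset.range n) (hr : 0 ∈ R)
    (F : Finset (ℕ × ℕ)) (hsp : RSpecial R F) (hfeas : FeasibleDir n R F)
    (K : Finset (Finset ℕ)) (hK : ∀ ℓ ∈ K, ℓ ⊆ Finset.range n ∧ 2 ≤ ℓ.card)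
    (u v : ℕ) (hf : (u, v) ∈ F) :
    InDrop n R F K (u, v) ↔
      ∃ w : ℕ, w < n ∧ (∃ a b : ℕ, IsBadInterval n R F v a b ∧ w ∉ Set.Icc a b) ∧
        GammaPath K v w := by
  classical
  obtain ⟨hends, hne0, huniq, hreach, hcross, hdir⟩ := hsp
  have huv : u ≠ v := (hends _ hf).1
  have huR : u ∈ R := (hends _ hf).2.1
  have hvR : v ∈ R := (hends _ hf).2.2
  have hv0 : v ≠ 0 := hne0 _ hf
  constructor
  · -- InDrop → ∃ w ...
    intro hd
    by_contra hno
    push_neg at hno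
    obtain ⟨a₀, b₀, hbad⟩ := badex (F := F) hR hvR (by omega)
    have hS : ∀ w, w < n → GammaPath K v w → w ∈ Set.Icc a₀ b₀ := by
      intro w hw hg
      by_contra hcon
      exact hno w hw ⟨a₀, b₀, hbad, hcon⟩ hg
    set S : Finset ℕ := insert v ((Finset.range n).filter fun w => GammaPath K v w) with hSdef
    have hSmem : ∀ s ∈ S, a₀ ≤ s ∧ s ≤ b₀ := by
      intro s hs
      rcases Finset.mem_insert.mp hs with rfl | hs
      · exact ⟨hbad.1, hbad.2.1⟩
      · rw [Finset.mem_filter, Finset.mem_range] at hs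
        have := hS s hs.1 hs.2
        rw [Set.mem_Icc] at this
        exact this
    have hSne : S.Nonempty := ⟨v, Finset.mem_insert_self _ _⟩
    set c := S.min' hSne with hcdef
    set d := S.max' hSne with hddef
    have hcS : c ∈ S := Finset.min'_mem _ _
    have hdS : d ∈ S := Finset.max'_mem _ _
    have hcv : c ≤ v := Finset.min'_le _ _ (Finset.mem_insert_self _ _)
    have hvd : v ≤ d := Finset.le_max' _ _ (Finset.mem_insert_self _ _)
    have ha₀1 : 1 ≤ a₀ := by
      by_contra hcon
      have h0 : Reach F v 0 := hbad.2.2.2.1 0 hr (by omega) (by omega)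
      obtain ⟨k, hk⟩ := reach_iff_rn.mp h0
      cases hk with
      | refl => exact hv0 rfl
      | tail _ e => exact hne0 _ e rfl
    have hc1 : 1 ≤ c := by have := (hSmem c hcS).1; omega
    have hdn : d ≤ n - 1 := by
      have := (hSmem d hdS).2; have := hbad.2.2.1; omega
    have hcd : c ≤ d := le_trans hcv hvd
    -- responsibility of (u,v) for Icc c d
    have hresp : Responsible F (u, v) (Set.Icc c d) := by
      refine ⟨hf, ⟨Set.mem_Icc.mpr ⟨hcv, hvd⟩, ?_⟩, ?_⟩
      · intro huIcc
        rw [Set.mem_Icc] at huIcc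
        have hvu : Reach F v u := hbad.2.2.2.1 u huR
          (le_trans (hSmem c hcS).1 huIcc.1) (le_trans huIcc.2 (hSmem d hdS).2)
        exact huv (reach_antisymm hends hne0 huniq hreach huR
          (Relation.ReflTransGen.single hf) hvu)
      · rintro g' hg' hru ⟨hg2C, _⟩
        rw [Set.mem_Icc] at hg2C
        have hg2R : g'.2 ∈ R := (hends _ hg').2.2
        have hvg : Reach F v g'.2 := hbad.2.2.2.1 g'.2 hg2R
          (le_trans (hSmem c hcS).1 hg2C.1) (le_trans hg2C.2 (hSmem d hdS).2)
        have hgv : Reach F g'.2 v := hru.trans (Relation.ReflTransGen.single hf)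
        have hveq : v = g'.2 := reach_antisymm hends hne0 huniq hreach hvR hvg hgv
        have hvu : Reach F v u := hveq ▸ hru
        exact huv (reach_antisymm hends hne0 huniq hreach huR
          (Relation.ReflTransGen.single hf) hvu)
    obtain ⟨ℓ, hlK, ⟨y, hyl, hyC⟩, ⟨y', hy'l, hy'C⟩⟩ :=
      hd.2 (Set.Icc c d) ⟨c, d, hc1, hcd, hdn, rfl⟩
        ⟨v, Set.mem_Icc.mpr ⟨hcv, hvd⟩, Finset.mem_coe.mpr hvR⟩ hresp
    -- the contradiction machine
    have GPall : (∃ ℓ₁' ∈ K, v ∈ ℓ₁' ∧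
        Relation.ReflTransGen (fun A B => A ∈ K ∧ B ∈ K ∧ Intersecting A B) ℓ₁' ℓ) → False := by
      rintro ⟨ℓ₁', hK1, hv1, hch⟩
      have hy'n : y' < n := Finset.mem_range.mp ((hK ℓ hlK).1 hy'l)
      have hy'S : y' ∈ S := Finset.mem_insert_of_mem
        (Finset.mem_filter.mpr ⟨Finset.mem_range.mpr hy'n, ⟨ℓ₁', hK1, ℓ, hlK, hv1, hy'l, hch⟩⟩)
      exact hy'C (Set.mem_Icc.mpr ⟨Finset.min'_le _ _ hy'S, Finset.le_max' _ _ hy'S⟩)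
    by_cases hyS : y ∈ S
    · rcases Finset.mem_insert.mp hyS with rfl | hyF
      · exact GPall ⟨ℓ, hlK, hyl, Relation.ReflTransGen.refl⟩
      · obtain ⟨l1, h1, l2, h2, hv1, hyin, hch⟩ := (Finset.mem_filter.mp hyF).2
        exact GPall ⟨l1, h1, hv1,
          hch.tail ⟨h2, hlK, Or.inl ⟨y, Finset.mem_inter.mpr ⟨hyin, hyl⟩⟩⟩⟩
    · rw [Set.mem_Icc] at hyC
      have hcy : c < y ∧ y < d := by
        constructor
        · rcases lt_or_eq_of_le hyC.1 with h | h
          · exact h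
          · exact absurd (h ▸ hcS) hyS
        · rcases lt_or_eq_of_le hyC.2 with h | h
          · exact h
          · exact absurd (h ▸ hdS) hyS
      have hget : ∀ s ∈ S, s ≠ v → GammaPath K v s := by
        intro s hs hsv
        exact (Finset.mem_filter.mp ((Finset.mem_insert.mp hs).resolve_left hsv)).2
      have hlv : ∃ ℓv ∈ K, v ∈ ℓv := by
        by_cases hcveq : c = v
        · obtain ⟨l1, h1, _, _, hv1, _, _⟩ := hget d hdS (by omega)
          exact ⟨l1, h1, hv1⟩
        · obtain ⟨l1, h1, _, _, hv1, _, _⟩ := hget c hcS hcveq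
          exact ⟨l1, h1, hv1⟩
      obtain ⟨ℓv, hKv, hvlv⟩ := hlv
      have hchainS : ∀ s ∈ S, ∃ ℓs ∈ K, s ∈ ℓs ∧
          Relation.ReflTransGen (fun A B => A ∈ K ∧ B ∈ K ∧ Intersecting A B) ℓv ℓs := by
        intro s hs
        by_cases hsv : s = v
        · exact ⟨ℓv, hKv, hsv ▸ hvlv, Relation.ReflTransGen.refl⟩
        · obtain ⟨l1, h1, l2, h2, hv1, hsl, hch⟩ := hget s hs hsv
          exact ⟨l2, h2, hsl, (Relation.ReflTransGen.single
            ⟨hKv, h1, Or.inl ⟨v, Finset.mem_inter.mpr ⟨hvlv, hv1⟩⟩⟩).trans hch⟩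
      obtain ⟨ℓc, hKc, hcl, hchc⟩ := hchainS c hcS
      obtain ⟨ℓd, hKd, hdl, hchd⟩ := hchainS d hdS
      have hsymm : Symmetric (fun (A B : Finset ℕ) => A ∈ K ∧ B ∈ K ∧ Intersecting A B) :=
        fun A B h => ⟨h.2.1, h.1, intersecting_symm h.2.2⟩
      have hrev := (@Relation.ReflTransGen.stdSymm _ _ ⟨hsymm⟩).symm _ _ hchc
      have hCD : Relation.ReflTransGen (fun A B => A ∈ K ∧ B ∈ K ∧ Intersecting A B) ℓc ℓd :=
        hrev.trans hchd
      have walk : ∀ ℓ'', Relation.ReflTransGen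
          (fun A B => A ∈ K ∧ B ∈ K ∧ Intersecting A B) ℓc ℓ'' →
          (∃ ℓs ∈ K, (Relation.ReflTransGen
              (fun A B => A ∈ K ∧ B ∈ K ∧ Intersecting A B) ℓv ℓs) ∧
            (y ∈ ℓs ∨ ((∃ e ∈ ℓs, e < y) ∧ ∃ e ∈ ℓs, y < e))) ∨ (∃ e ∈ ℓ'', e < y) := by
        intro ℓ'' hch
        induction hch with
        | refl => exact Or.inr ⟨c, hcl, hcy.1⟩
        | tail hch2 hrel ih =>
          rename_i lmid lnext
          rcases ih with done | ⟨e0, he0, he0y⟩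
          · exact Or.inl done
          · by_cases hnl : ∃ e ∈ lnext, e < y
            · exact Or.inr hnl
            · push_neg at hnl
              by_cases hyln : y ∈ lnext
              · exact Or.inl ⟨lnext, hrel.2.1, hchc.trans (hch2.tail hrel), Or.inl hyln⟩
              · rcases hrel.2.2 with hi | ⟨_, ⟨yy, hyy, x₁, hx₁, x₂, hx₂, l1, l2⟩⟩
                · obtain ⟨s, hs⟩ := hi
                  rw [Finset.mem_inter] at hs
                  refine Or.inl ⟨lmid, hrel.1, hchc.trans hch2,
                    Or.inr ⟨⟨e0, he0, he0y⟩, ⟨s, hs.1, ?_⟩⟩⟩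
                  have h1 := hnl s hs.2
                  have h2 : s ≠ y := fun h => hyln (h ▸ hs.2)
                  omega
                · refine Or.inl ⟨lmid, hrel.1, hchc.trans hch2,
                    Or.inr ⟨⟨e0, he0, he0y⟩, ⟨x₂, hx₂, ?_⟩⟩⟩
                  have h1 : y ≤ yy := hnl yy hyy
                  have h2 : yy ≠ y := fun h => hyln (h ▸ hyy)
                  omega
      have hstr : ∃ ℓs ∈ K, (Relation.ReflTransGen
          (fun A B => A ∈ K ∧ B ∈ K ∧ Intersecting A B) ℓv ℓs) ∧
          (y ∈ ℓs ∨ ((∃ e ∈ ℓs, e < y) ∧ ∃ e ∈ ℓs, y < e)) := by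
        rcases walk ℓd hCD with done | ⟨e0, he0, he0y⟩
        · exact done
        · exact ⟨ℓd, hKd, hchd, Or.inr ⟨⟨e0, he0, he0y⟩, ⟨d, hdl, hcy.2⟩⟩⟩
      obtain ⟨ℓs, hKs, hchs, hsp2⟩ := hstr
      have hselS : ∀ e ∈ ℓs, e ∈ S := by
        intro e he
        have hen : e < n := Finset.mem_range.mp ((hK ℓs hKs).1 he)
        exact Finset.mem_insert_of_mem (Finset.mem_filter.mpr
          ⟨Finset.mem_range.mpr hen, ⟨ℓv, hKv, ℓs, hKs, hvlv, he, hchs⟩⟩)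
      rcases hsp2 with hyls | ⟨⟨e1, he1, he1y⟩, e2, he2, hye2⟩
      · exact hyS (hselS y hyls)
      · have hc1' : c ≤ e1 := Finset.min'_le _ _ (hselS e1 he1)
        have hd2' : e2 ≤ d := Finset.le_max' _ _ (hselS e2 he2)
        have hy'out : y' < c ∨ d < y' := by
          rw [Set.mem_Icc] at hy'C
          by_contra hcon
          push_neg at hcon
          exact hy'C ⟨by omega, by omega⟩
        have hint : Intersecting ℓ ℓs := by
          refine Or.inr ⟨⟨y, hyl, e1, he1, e2, he2, he1y, hye2⟩, ?_⟩
          rcases hy'out with h | h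
          · exact ⟨e1, he1, y', hy'l, y, hyl, by omega, he1y⟩
          · exact ⟨e2, he2, y, hyl, y', hy'l, hye2, by omega⟩
        exact GPall ⟨ℓv, hKv, hvlv, hchs.tail ⟨hKs, hlK, intersecting_symm hint⟩⟩
  · -- ∃ w ... → InDrop
    rintro ⟨w, hwn, ⟨a, b, hbad, hwab⟩, ℓ₁, h1K, ℓ₂, h2K, hv1, hw2, chain⟩
    refine ⟨hf, ?_⟩
    rintro C ⟨p, q, hp1, hpq, hqn, rfl⟩ hdang hresp
    have hvC : v ∈ Set.Icc p q := hresp.2.1.1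
    rw [Set.mem_Icc] at hvC
    have hcrux := crux hends hne0 huniq hreach hcross hdir hp1 hresp
    have hav : a ≤ v := hbad.1
    have hvb : v ≤ b := hbad.2.1
    have hbn : b ≤ n - 1 := hbad.2.2.1
    have hprop : ∀ w' ∈ R, min a p ≤ w' → w' ≤ max b q → Reach F v w' := by
      intro w' hw' h1 h2
      have hcase : (a ≤ w' ∧ w' ≤ b) ∨ (p ≤ w' ∧ w' ≤ q) := by omega
      rcases hcase with ⟨h3, h4⟩ | ⟨h3, h4⟩
      · exact hbad.2.2.2.1 w' hw' h3 h4
      · exact hcrux w' hw' h3 h4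
    have hmax := hbad.2.2.2.2 (min a p) (max b q) (min_le_left _ _) (le_max_left _ _)
      (by omega) hprop
    have hsub : a ≤ p ∧ q ≤ b := by omega
    have hwC : w ∉ Set.Icc p q := by
      rw [Set.mem_Icc] at hwab ⊢
      intro hc
      exact hwab ⟨by omega, by omega⟩
    have main : ∀ ℓ', Relation.ReflTransGen
        (fun A B => A ∈ K ∧ B ∈ K ∧ Intersecting A B) ℓ₁ ℓ' →
        (∃ ℓ ∈ K, Covers ℓ (Set.Icc p q)) ∨
          ((∃ e ∈ ℓ', (e : ℕ) ∈ Set.Icc p q) ∧ ℓ' ∈ K) := by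
      intro ℓ' hch
      induction hch with
      | refl => exact Or.inr ⟨⟨v, hv1, Set.mem_Icc.mpr ⟨hvC.1, hvC.2⟩⟩, h1K⟩
      | tail hch2 hrel ih =>
        rename_i lmid lnext
        rcases ih with done | ⟨⟨e, hel, heC⟩, hmidK⟩
        · exact Or.inl done
        · by_cases hout : ∃ e' ∈ lmid, (e' : ℕ) ∉ Set.Icc p q
          · exact Or.inl ⟨lmid, hmidK, ⟨e, hel, heC⟩, hout⟩
          · push_neg at hout
            rcases hrel.2.2 with hi | ⟨_, ⟨yy, hyy, x₁, hx₁, x₂, hx₂, l1, l2⟩⟩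
            · obtain ⟨s, hs⟩ := hi
              rw [Finset.mem_inter] at hs
              exact Or.inr ⟨⟨s, hs.2, hout s hs.1⟩, hrel.2.1⟩
            · have hb1 := hout x₁ hx₁
              have hb2 := hout x₂ hx₂
              rw [Set.mem_Icc] at hb1 hb2
              exact Or.inr ⟨⟨yy, hyy, Set.mem_Icc.mpr ⟨by omega, by omega⟩⟩, hrel.2.1⟩
    rcases main ℓ₂ chain with done | ⟨⟨e, hel, heC⟩, _⟩
    · exact done
    · exact ⟨ℓ₂, h2K, ⟨e, hel, heC⟩, ⟨w, hw2, hwC⟩⟩
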